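/- There exists a universal constant K > 0 with the following property. Let 0 < r ≤ ℓ/2, let C_{r,ℓ} ⊂ ℝ³ be a solid circular cylinder of radius r and height ℓ, let q > 0, and let μ be the measure with constant density q/|C_{r,ℓ}| on C_{r,ℓ} (so μ(C_{r,ℓ}) = q). Then the Coulomb self-energy satisfies ∫∫ 1/(4π ε₀ |x − y|) dμ(x) dμ(y) ≤ K (q²/(ε₀ ℓ)) (1 + log(ℓ/r)). -/

import Mathlib

open MeasureTheory Metric Filter
open scoped ENNReal Real
open Set

noncomputable section

abbrev E3 := EuclideanSpace ℝ (Fin 3)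

/-- The divergence of a vector field on ℝ³. -/
def divg (φ : E3 → E3) (x : E3) : ℝ :=
  ∑ i, fderiv ℝ φ x (EuclideanSpace.single i 1) i

/-- De Giorgi perimeter. -/
def perimeter (Ω : Set E3) : ℝ≥0∞ :=
  ⨆ (φ : E3 → E3) (_ : ContDiff ℝ 1 φ) (_ : HasCompactSupport φ)
    (_ : ∀ x, ‖φ x‖ ≤ 1), ENNReal.ofReal (∫ x in Ω, divg φ x)

/-- Coulomb self-energy of a measure. -/
def coulombEnergy (ε₀ : ℝ) (μ : Measure E3) : ℝ≥0∞ :=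
  ∫⁻ x, ∫⁻ y, ENNReal.ofReal (1 / (4 * Real.pi * ε₀ * dist x y)) ∂μ ∂μ

/-- Inverse capacitance. -/
def invCapacitance (ε₀ : ℝ) (Ω : Set E3) : ℝ≥0∞ :=
  ⨅ (μ : Measure E3) (_ : IsProbabilityMeasure μ) (_ : μ Ωᶜ = 0),
    coulombEnergy ε₀ μ

/-- The energy E(Ω) = σ P(Ω) + Q²/(2 C(Ω)). -/
def energyE (σ ε₀ Q : ℝ) (Ω : Set E3) : ℝ≥0∞ :=
  ENNReal.ofReal σ * perimeter Ω + ENNReal.ofReal (Q ^ 2 / 2) * invCapacitance ε₀ Ω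


/-- The standard solid circular cylinder of radius `r` and height `ℓ` in `ℝ³`. -/
def stdCylinder (r ℓ : ℝ) : Set E3 :=
  {x | x 0 ^ 2 + x 1 ^ 2 ≤ r ^ 2 ∧ 0 ≤ x 2 ∧ x 2 ≤ ℓ}

/-- A solid circular cylinder of radius `r` and height `ℓ`: an isometric copy of
the standard one. -/
def IsCylinder (r ℓ : ℝ) (C : Set E3) : Prop :=
  ∃ f : E3 ≃ᵢ E3, C = f '' stdCylinder r ℓ


theorem coord_le_dist (x y : E3) (i : Fin 3) : |x i - y i| ≤ dist x y := by
  rw [EuclideanSpace.dist_eq]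
  calc |x i - y i| = Real.sqrt ((x i - y i) ^ 2) := (Real.sqrt_sq_eq_abs _).symm
    _ ≤ _ := by
        apply Real.sqrt_le_sqrt
        have := Finset.single_le_sum (f := fun j => dist (x j) (y j) ^ 2)
          (fun j _ => by positivity) (Finset.mem_univ i)
        simpa [Real.dist_eq] using this

theorem vol_box (a b : Fin 3 → ℝ) :
    volume ({y : E3 | ∀ i, y i ∈ Icc (a i) (b i)}) = ∏ i, ENNReal.ofReal (b i - a i) := by
  have mp := (EuclideanSpace.volume_preserving_symm_measurableEquiv_toLp (Fin 3)).symm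
  rw [← mp.measure_preimage_equiv]
  have : (MeasurableEquiv.toLp 2 (Fin 3 → ℝ)).symm.symm ⁻¹' {y : E3 | ∀ i, y i ∈ Icc (a i) (b i)}
      = Set.pi univ (fun i => Icc (a i) (b i)) := by
    ext y; simp [MeasurableEquiv.coe_toLp, Set.mem_pi, Pi.le_def, forall_and]
  rw [this, volume_pi_pi]
  simp [Real.volume_Icc]

theorem vol_img (f : E3 ≃ᵢ E3) (A : Set E3) : volume (f '' A) = volume A := by
  set L := f.toRealLinearIsometryEquiv
  have h : f '' A = (· + f 0) '' (L '' A) := by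
    rw [Set.image_image]; apply Set.image_congr; intro x _; simp [L]
  have h2 : (L '' A : Set E3) = L.symm ⁻¹' A := by
    ext y
    constructor
    · rintro ⟨x, hx, rfl⟩; simpa using hx
    · intro hy; exact ⟨_, hy, by simp⟩
  rw [h, Set.image_add_right, measure_preimage_add_right, h2,
    L.symm.measurePreserving.measure_preimage_emb
      L.symm.toHomeomorph.measurableEmbedding]

theorem stdCyl_meas (r ℓ : ℝ) : MeasurableSet (stdCylinder r ℓ) := by
  have c0 : Continuous fun x : E3 => x 0 := (EuclideanSpace.proj (0 : Fin 3) : E3 →L[ℝ] ℝ).continuous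
  have c1 : Continuous fun x : E3 => x 1 := (EuclideanSpace.proj (1 : Fin 3) : E3 →L[ℝ] ℝ).continuous
  have c2 : Continuous fun x : E3 => x 2 := (EuclideanSpace.proj (2 : Fin 3) : E3 →L[ℝ] ℝ).continuous
  have : stdCylinder r ℓ = {x : E3 | x 0 ^ 2 + x 1 ^ 2 ≤ r ^ 2} ∩ ({x | 0 ≤ x 2} ∩ {x | x 2 ≤ ℓ}) := by
    ext x; simp [stdCylinder, and_assoc]
  rw [this]
  exact (measurableSet_le (by fun_prop) measurable_const).inter
    ((measurableSet_le measurable_const c2.measurable).inter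
      (measurableSet_le c2.measurable measurable_const))

theorem stdCyl_box_le {r ℓ : ℝ} (hr : 0 < r) (hl : 0 ≤ ℓ) (z : E3) (s : ℝ) (hs : 0 ≤ s) :
    volume (stdCylinder r ℓ ∩ closedBall z s) ≤ ENNReal.ofReal (8 * r ^ 2 * s) := by
  set A : Fin 3 → ℝ := ![-r, -r, z 2 - s]
  set B : Fin 3 → ℝ := ![r, r, z 2 + s]
  have hsub : stdCylinder r ℓ ∩ closedBall z s ⊆ {y : E3 | ∀ i, y i ∈ Icc (A i) (B i)} := by
    rintro y ⟨⟨h01, _, _⟩, hball⟩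
    have h2 := abs_le.mp ((coord_le_dist y z 2).trans (mem_closedBall.mp hball))
    have hy0 : |y 0| ≤ r := by
      rw [abs_le]; constructor <;> nlinarith [sq_nonneg (y 1)]
    have hy1 : |y 1| ≤ r := by
      rw [abs_le]; constructor <;> nlinarith [sq_nonneg (y 0)]
    rw [abs_le] at hy0 hy1
    intro i
    fin_cases i <;> simp [A, B] <;> constructor <;> first
      | linarith [hy0.1, hy0.2] | linarith [hy1.1, hy1.2] | linarith [h2.1, h2.2]
  calc volume _ ≤ _ := measure_mono hsub
    _ = ∏ i : Fin 3, ENNReal.ofReal (B i - A i) := vol_box _ _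
    _ ≤ ENNReal.ofReal (8 * r ^ 2 * s) := by
        rw [Fin.prod_univ_three]
        simp only [A, B]
        norm_num [Matrix.cons_val_two]
        rw [← ENNReal.ofReal_mul (by positivity), ← ENNReal.ofReal_mul (by positivity)]
        exact ENNReal.ofReal_le_ofReal (by nlinarith)

theorem stdCyl_diam {r ℓ : ℝ} (hr : 0 < r) (hrl : r ≤ ℓ / 2) {x y : E3}
    (hx : x ∈ stdCylinder r ℓ) (hy : y ∈ stdCylinder r ℓ) : dist x y ≤ 2 * ℓ := by
  have hl : 0 < ℓ := by linarith
  obtain ⟨hx01, hx2, hx2'⟩ := hx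
  obtain ⟨hy01, hy2, hy2'⟩ := hy
  rw [EuclideanSpace.dist_eq]
  rw [show (2 * ℓ) = Real.sqrt ((2 * ℓ) ^ 2) from (Real.sqrt_sq (by linarith)).symm]
  apply Real.sqrt_le_sqrt
  rw [Fin.sum_univ_three]
  simp only [Real.dist_eq]
  have e0 : |x 0 - y 0| ^ 2 ≤ (2 * r) ^ 2 := by
    rw [sq_abs]; nlinarith [sq_nonneg (x 1), sq_nonneg (y 1), sq_nonneg (x 0 + y 0), sq_nonneg (x 0 - y 0)]
  have e1 : |x 1 - y 1| ^ 2 ≤ (2 * r) ^ 2 := by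
    rw [sq_abs]; nlinarith [sq_nonneg (x 0), sq_nonneg (y 0), sq_nonneg (x 1 + y 1), sq_nonneg (x 1 - y 1)]
  have e2 : |x 2 - y 2| ^ 2 ≤ ℓ ^ 2 := by
    rw [sq_abs]; nlinarith
  nlinarith

theorem stdCyl_vol {r ℓ : ℝ} (hr : 0 < r) (hl : 0 ≤ ℓ) :
    volume (stdCylinder r ℓ) ≤ ENNReal.ofReal (16 * r ^ 2 * ℓ) := by
  have hsub : stdCylinder r ℓ ⊆ {y : E3 | ∀ i, y i ∈ Icc ((![-r,-r,0] : Fin 3 → ℝ) i) ((![r,r,ℓ] : Fin 3 → ℝ) i)} := by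
    rintro y ⟨h01, h2, h2'⟩
    have hy0 : |y 0| ≤ r := by rw [abs_le]; constructor <;> nlinarith [sq_nonneg (y 1)]
    have hy1 : |y 1| ≤ r := by rw [abs_le]; constructor <;> nlinarith [sq_nonneg (y 0)]
    rw [abs_le] at hy0 hy1
    intro i
    fin_cases i <;> simp <;> constructor <;> first
      | linarith [hy0.1, hy0.2] | linarith [hy1.1, hy1.2] | linarith
  calc volume _ ≤ _ := measure_mono hsub
    _ = _ := vol_box _ _
    _ ≤ _ := by
        rw [Fin.prod_univ_three]
        norm_num [Matrix.cons_val_two]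
        rw [← ENNReal.ofReal_mul (by positivity), ← ENNReal.ofReal_mul (by positivity)]
        exact ENNReal.ofReal_le_ofReal (by nlinarith)

theorem vol_closedBall_le (x : E3) (s : ℝ) (hs : 0 ≤ s) :
    volume (closedBall x s) ≤ ENNReal.ofReal (8 * s ^ 3) := by
  have hsub : closedBall x s ⊆ {y : E3 | ∀ i, y i ∈ Icc (x i - s) (x i + s)} := by
    intro y hy i
    have := coord_le_dist y x i
    rw [mem_closedBall] at hy
    have h := abs_le.mp (this.trans hy)
    constructor <;> linarith [h.1, h.2]
  calc volume (closedBall x s) ≤ _ := measure_mono hsub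
    _ = ∏ i : Fin 3, ENNReal.ofReal ((x i + s) - (x i - s)) := vol_box _ _
    _ ≤ ENNReal.ofReal (8 * s ^ 3) := by
        rw [Fin.prod_univ_three]
        simp only [show ∀ c : ℝ, (c + s) - (c - s) = 2 * s by intro c; ring]
        rw [← ENNReal.ofReal_mul (by positivity), ← ENNReal.ofReal_mul (by positivity)]
        exact ENNReal.ofReal_le_ofReal (by nlinarith)

theorem inner_bound {r ℓ : ℝ} (hr : 0 < r) (hrl : r ≤ ℓ / 2) (C : Set E3) (hC : MeasurableSet C)
    (hvol : volume C ≤ ENNReal.ofReal (16 * r ^ 2 * ℓ))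
    (hslab : ∀ z s, 0 ≤ s → volume (C ∩ closedBall z s) ≤ ENNReal.ofReal (8 * r ^ 2 * s))
    (x : E3) :
    ∫⁻ y in C, ENNReal.ofReal (1 / dist x y) ≤
      ENNReal.ofReal (24 * r ^ 2 * (1 + Real.log (ℓ / r))) := by
  have hl : 0 < ℓ := by linarith
  set a : ℝ := 1 / (2 * ℓ) with ha
  set b : ℝ := 1 / r with hb
  have ha0 : 0 < a := by positivity
  have hb0 : 0 < b := by positivity
  have hab : a ≤ b := by
    rw [ha, hb]
    apply one_div_le_one_div_of_le hr; linarith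
  -- layer cake
  have hmeas : Measurable fun y : E3 => 1 / dist x y := by
    simp only [one_div]
    exact (continuous_const.dist continuous_id).measurable.inv
  rw [MeasureTheory.lintegral_eq_lintegral_meas_lt _
    (Filter.Eventually.of_forall fun y => one_div_nonneg.mpr dist_nonneg) hmeas.aemeasurable]
  -- bound the distribution function
  have key : ∀ t : ℝ, 0 < t →
      (volume.restrict C) {y : E3 | t < 1 / dist x y} ≤
        volume (C ∩ closedBall x (1 / t)) := by
    intro t ht
    rw [Measure.restrict_apply' hC]
    refine measure_mono fun y hy => ?_
    obtain ⟨hy1, hy2⟩ := hy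
    refine ⟨hy2, ?_⟩
    simp only [mem_setOf_eq] at hy1
    rw [mem_closedBall, dist_comm]
    rcases eq_or_lt_of_le (dist_nonneg (x := x) (y := y)) with h0 | h0
    · rw [← h0]; positivity
    · rw [lt_div_iff₀ h0] at hy1
      rw [le_div_iff₀ ht, mul_comm]
      exact hy1.le
  -- split the domain
  have hsplit1 : Ioi (0:ℝ) = Ioc 0 a ∪ Ioi a := (Set.Ioc_union_Ioi_eq_Ioi ha0.le).symm
  have hsplit2 : Ioi a = Ioc a b ∪ Ioi b := (Set.Ioc_union_Ioi_eq_Ioi hab).symm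
  rw [hsplit1, lintegral_union measurableSet_Ioi (Set.Ioc_disjoint_Ioi le_rfl),
    hsplit2, lintegral_union measurableSet_Ioi (Set.Ioc_disjoint_Ioi le_rfl)]
  set G : ℝ → ℝ≥0∞ := fun t => (volume.restrict C) {y : E3 | t < 1 / dist x y} with hG
  -- piece 1
  have P1 : ∫⁻ t in Ioc (0:ℝ) a, G t ≤ ENNReal.ofReal (8 * r ^ 2) := by
    have h1 : ∀ t ∈ Ioc (0:ℝ) a, G t ≤ ENNReal.ofReal (16 * r ^ 2 * ℓ) := by
      intro t _
      calc G t ≤ (volume.restrict C) univ := measure_mono (subset_univ _)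
        _ = volume C := by rw [Measure.restrict_apply_univ]
        _ ≤ _ := hvol
    calc ∫⁻ t in Ioc (0:ℝ) a, G t ≤ ∫⁻ _ in Ioc (0:ℝ) a, ENNReal.ofReal (16 * r ^ 2 * ℓ) :=
          setLIntegral_mono' measurableSet_Ioc h1
      _ = ENNReal.ofReal (16 * r ^ 2 * ℓ) * volume (Ioc (0:ℝ) a) := setLIntegral_const _ _
      _ = ENNReal.ofReal (16 * r ^ 2 * ℓ) * ENNReal.ofReal a := by rw [Real.volume_Ioc, sub_zero]
      _ = ENNReal.ofReal (16 * r ^ 2 * ℓ * a) := (ENNReal.ofReal_mul (by positivity)).symm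
      _ = ENNReal.ofReal (8 * r ^ 2) := by
          congr 1; rw [ha]; field_simp; ring
  -- piece 2
  have P2 : ∫⁻ t in Ioc a b, G t ≤
      ENNReal.ofReal (8 * r ^ 2 * (Real.log 2 + Real.log (ℓ / r))) := by
    have h2 : ∀ t ∈ Ioc a b, G t ≤ ENNReal.ofReal (8 * r ^ 2 * (1 / t)) := by
      intro t ht
      have ht0 : 0 < t := lt_of_lt_of_le ha0 ht.1.le
      exact le_trans (key t ht0) (hslab x (1 / t) (by positivity))
    have hcont : ContinuousOn (fun t : ℝ => 8 * r ^ 2 * (1 / t)) (Icc a b) := by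
      apply ContinuousOn.mul continuousOn_const
      exact ContinuousOn.div continuousOn_const continuousOn_id
        (fun t ht => ne_of_gt (lt_of_lt_of_le ha0 ht.1))
    have hint : IntegrableOn (fun t : ℝ => 8 * r ^ 2 * (1 / t)) (Ioc a b) :=
      (hcont.integrableOn_Icc).mono_set Set.Ioc_subset_Icc_self
    calc ∫⁻ t in Ioc a b, G t ≤ ∫⁻ t in Ioc a b, ENNReal.ofReal (8 * r ^ 2 * (1 / t)) :=
          setLIntegral_mono' measurableSet_Ioc h2
      _ = ENNReal.ofReal (∫ t in Ioc a b, 8 * r ^ 2 * (1 / t)) := by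
          rw [ofReal_integral_eq_lintegral_ofReal hint]
          refine (ae_restrict_iff' measurableSet_Ioc).mpr
            (Filter.Eventually.of_forall fun t ht => ?_)
          have ht0 : 0 < t := lt_of_lt_of_le ha0 ht.1.le
          positivity
      _ ≤ _ := by
          apply ENNReal.ofReal_le_ofReal
          have h0ab : (0:ℝ) ∉ Set.uIcc a b := by
            rw [Set.uIcc_of_le hab]
            exact fun h => absurd h.1 (not_le.mpr ha0)
          have hba : b / a = 2 * (ℓ / r) := by rw [hb, ha]; field_simp
          rw [← intervalIntegral.integral_of_le hab, intervalIntegral.integral_const_mul,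
            integral_one_div h0ab, hba, Real.log_mul (by norm_num) (by positivity)]
  -- piece 3
  have P3 : ∫⁻ t in Ioi b, G t ≤ ENNReal.ofReal (4 * r ^ 2) := by
    have h3 : ∀ t ∈ Ioi b, G t ≤ ENNReal.ofReal (8 * t ^ (-3 : ℝ)) := by
      intro t ht
      have ht0 : 0 < t := lt_trans hb0 ht
      have : t ^ (-3 : ℝ) = (1 / t) ^ 3 := by
        rw [Real.rpow_neg ht0.le, div_pow, one_pow, ← Real.rpow_natCast t 3]
        norm_num
      rw [this]
      calc G t ≤ volume (C ∩ closedBall x (1 / t)) := key t ht0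
        _ ≤ volume (closedBall x (1 / t)) := measure_mono inter_subset_right
        _ ≤ _ := vol_closedBall_le x (1 / t) (by positivity)
    have hint : IntegrableOn (fun t : ℝ => 8 * t ^ (-3 : ℝ)) (Ioi b) :=
      (integrableOn_Ioi_rpow_of_lt (by norm_num) hb0).const_mul 8
    calc ∫⁻ t in Ioi b, G t ≤ ∫⁻ t in Ioi b, ENNReal.ofReal (8 * t ^ (-3 : ℝ)) :=
          setLIntegral_mono' measurableSet_Ioi h3
      _ = ENNReal.ofReal (∫ t in Ioi b, 8 * t ^ (-3 : ℝ)) := by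
          rw [ofReal_integral_eq_lintegral_ofReal hint]
          refine (ae_restrict_iff' measurableSet_Ioi).mpr
            (Filter.Eventually.of_forall fun t ht => ?_)
          have ht0 : (0:ℝ) < t := lt_trans hb0 ht
          exact mul_nonneg (by norm_num) (Real.rpow_nonneg ht0.le _)
      _ ≤ _ := by
          apply ENNReal.ofReal_le_ofReal
          rw [MeasureTheory.integral_const_mul, integral_Ioi_rpow_of_lt (by norm_num) hb0]
          have hbr : b ^ ((-3:ℝ) + 1) = r ^ 2 := by
            rw [hb, one_div, show ((-3:ℝ)+1) = -2 by norm_num, Real.inv_rpow hr.le,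
              Real.rpow_neg hr.le, inv_inv, show ((2:ℝ)) = ((2:ℕ):ℝ) by norm_num,
              Real.rpow_natCast]
          rw [hbr, show ((-3:ℝ)+1) = -2 by norm_num]
          nlinarith [sq_nonneg r]
  -- combine
  have hL : 0 ≤ Real.log (ℓ / r) := Real.log_nonneg (by rw [le_div_iff₀ hr]; linarith)
  have hlog2 : Real.log 2 ≤ 1 := by
    have := Real.log_le_sub_one_of_pos (by norm_num : (0:ℝ) < 2); linarith
  have hlog2' : 0 ≤ Real.log 2 := Real.log_nonneg one_le_two
  calc (∫⁻ t in Ioc (0:ℝ) a, G t) + ((∫⁻ t in Ioc a b, G t) + ∫⁻ t in Ioi b, G t)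
      ≤ ENNReal.ofReal (8 * r ^ 2) + (ENNReal.ofReal (8 * r ^ 2 * (Real.log 2 + Real.log (ℓ / r)))
        + ENNReal.ofReal (4 * r ^ 2)) := add_le_add P1 (add_le_add P2 P3)
    _ = ENNReal.ofReal (8 * r ^ 2 + (8 * r ^ 2 * (Real.log 2 + Real.log (ℓ / r)) + 4 * r ^ 2)) := by
        rw [← ENNReal.ofReal_add (by positivity) (by positivity),
          ← ENNReal.ofReal_add (by positivity) (by positivity)]
    _ ≤ _ := by
        apply ENNReal.ofReal_le_ofReal
        nlinarith [sq_nonneg r, mul_nonneg (sq_nonneg r) hL]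


theorem cyl_props {r ℓ : ℝ} (hr : 0 < r) (hrl : r ≤ ℓ / 2) (f : E3 ≃ᵢ E3) :
    MeasurableSet (f '' stdCylinder r ℓ) ∧
    volume (f '' stdCylinder r ℓ) ≤ ENNReal.ofReal (16 * r ^ 2 * ℓ) ∧
    ∀ z s, 0 ≤ s → volume (f '' stdCylinder r ℓ ∩ closedBall z s) ≤
      ENNReal.ofReal (8 * r ^ 2 * s) := by
  have hl : (0:ℝ) ≤ ℓ := by linarith
  have himg : f '' stdCylinder r ℓ = f.symm ⁻¹' stdCylinder r ℓ := by
    ext y; constructor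
    · rintro ⟨x, hx, rfl⟩; simpa using hx
    · intro hy; exact ⟨f.symm y, hy, by simp⟩
  refine ⟨?_, ?_, ?_⟩
  · rw [himg]
    exact f.symm.continuous.measurable (stdCyl_meas r ℓ)
  · rw [vol_img]
    exact stdCyl_vol hr hl
  · intro z s hs
    have hb : closedBall z s = f '' closedBall (f.symm z) s := by
      rw [IsometryEquiv.image_closedBall, f.apply_symm_apply]
    rw [hb, ← Set.image_inter f.injective, vol_img]
    exact stdCyl_box_le hr hl _ s hs

/-- There is a universal constant `K > 0` such that for every
`0 < r ≤ ℓ/2`, every solid circular cylinder `C` of radius `r` and height `ℓ`, and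
every charge `q > 0`, the Coulomb self-energy of the uniform charge distribution of
total charge `q` on `C` (density `q/|C| = q/(πr²ℓ)`) is at most
`K (q²/(ε₀ ℓ))(1 + log(ℓ/r))`. -/
theorem cylinder_self_energy_bound :
    ∃ K : ℝ, 0 < K ∧ ∀ (ε₀ r ℓ q : ℝ), 0 < ε₀ → 0 < r → r ≤ ℓ / 2 → 0 < q →
      ∀ C : Set E3, IsCylinder r ℓ C →
        (let μ : Measure E3 :=
          ENNReal.ofReal (q / (Real.pi * r ^ 2 * ℓ)) • volume.restrict C
        coulombEnergy ε₀ μ ≤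
          ENNReal.ofReal (K * (q ^ 2 / (ε₀ * ℓ)) * (1 + Real.log (ℓ / r)))) := by
  refine ⟨400, by norm_num, ?_⟩
  intro ε₀ r ℓ q hε hr hrl hq C hCyl
  obtain ⟨f, rfl⟩ := hCyl
  obtain ⟨hC, hvolC, hslabC⟩ := cyl_props hr hrl f
  set C := f '' stdCylinder r ℓ
  have hl : 0 < ℓ := by linarith
  have hL : 0 ≤ Real.log (ℓ / r) := Real.log_nonneg (by rw [le_div_iff₀ hr]; linarith)
  have hπ := Real.pi_gt_three
  dsimp only
  set c₀ : ℝ := q / (Real.pi * r ^ 2 * ℓ) with hc₀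
  have hc₀0 : 0 ≤ c₀ := by positivity
  set c : ℝ≥0∞ := ENNReal.ofReal c₀ with hc
  set L := Real.log (ℓ / r)
  set J₀ : ℝ := 24 * r ^ 2 * (1 + L) with hJ₀
  have hJ₀0 : 0 ≤ J₀ := by positivity
  have hA0 : (0:ℝ) ≤ 1 / (4 * Real.pi * ε₀) := by positivity
  have hpt : ∀ x y : E3, ENNReal.ofReal (1 / (4 * Real.pi * ε₀ * dist x y)) =
      ENNReal.ofReal (1 / (4 * Real.pi * ε₀)) * ENNReal.ofReal (1 / dist x y) := by
    intro x y
    rw [← ENNReal.ofReal_mul hA0, one_div_mul_one_div]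
  have hinner : ∀ x : E3,
      (∫⁻ y in C, ENNReal.ofReal (1 / (4 * Real.pi * ε₀ * dist x y))) ≤
        ENNReal.ofReal (1 / (4 * Real.pi * ε₀)) * ENNReal.ofReal J₀ := by
    intro x
    calc (∫⁻ y in C, ENNReal.ofReal (1 / (4 * Real.pi * ε₀ * dist x y)))
        = ∫⁻ y in C, ENNReal.ofReal (1 / (4 * Real.pi * ε₀)) * ENNReal.ofReal (1 / dist x y) := by
          simp only [hpt]
      _ = ENNReal.ofReal (1 / (4 * Real.pi * ε₀)) * ∫⁻ y in C, ENNReal.ofReal (1 / dist x y) :=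
          lintegral_const_mul' _ _ ENNReal.ofReal_ne_top
      _ ≤ _ := mul_le_mul_right (inner_bound hr hrl C hC hvolC hslabC x) _
  unfold coulombEnergy
  simp only [lintegral_smul_measure, smul_eq_mul]
  rw [lintegral_const_mul' c _ ENNReal.ofReal_ne_top]
  have hmain : (∫⁻ x in C, ∫⁻ y in C, ENNReal.ofReal (1 / (4 * Real.pi * ε₀ * dist x y))) ≤
      ENNReal.ofReal (1 / (4 * Real.pi * ε₀)) * ENNReal.ofReal J₀ * ENNReal.ofReal (16 * r ^ 2 * ℓ) := by
    calc (∫⁻ x in C, ∫⁻ y in C, ENNReal.ofReal (1 / (4 * Real.pi * ε₀ * dist x y)))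
        ≤ ∫⁻ _ in C, ENNReal.ofReal (1 / (4 * Real.pi * ε₀)) * ENNReal.ofReal J₀ :=
          lintegral_mono fun x => hinner x
      _ = ENNReal.ofReal (1 / (4 * Real.pi * ε₀)) * ENNReal.ofReal J₀ * volume C :=
          setLIntegral_const _ _
      _ ≤ _ := mul_le_mul_right hvolC _
  calc c * (c * ∫⁻ x in C, ∫⁻ y in C, ENNReal.ofReal (1 / (4 * Real.pi * ε₀ * dist x y)))
      ≤ c * (c * (ENNReal.ofReal (1 / (4 * Real.pi * ε₀)) * ENNReal.ofReal J₀ *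
          ENNReal.ofReal (16 * r ^ 2 * ℓ))) := mul_le_mul_right (mul_le_mul_right hmain _) _
    _ = ENNReal.ofReal (c₀ * (c₀ * (1 / (4 * Real.pi * ε₀) * J₀ * (16 * r ^ 2 * ℓ)))) := by
        rw [← ENNReal.ofReal_mul hA0, ← ENNReal.ofReal_mul (by positivity),
          ← ENNReal.ofReal_mul hc₀0, ← ENNReal.ofReal_mul hc₀0]
    _ ≤ _ := by
        apply ENNReal.ofReal_le_ofReal
        have heq : c₀ * (c₀ * (1 / (4 * Real.pi * ε₀) * J₀ * (16 * r ^ 2 * ℓ)))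
            = (96 / Real.pi ^ 3) * ((q ^ 2 / (ε₀ * ℓ)) * (1 + L)) := by
          rw [hc₀, hJ₀]
          field_simp
          ring
        rw [heq]
        have hX : 0 ≤ (q ^ 2 / (ε₀ * ℓ)) * (1 + L) := by positivity
        calc (96 / Real.pi ^ 3) * ((q ^ 2 / (ε₀ * ℓ)) * (1 + L))
            ≤ 400 * ((q ^ 2 / (ε₀ * ℓ)) * (1 + L)) := by
              apply mul_le_mul_of_nonneg_right _ hX
              calc (96:ℝ) / Real.pi ^ 3 ≤ 96 / 1 := by
                    apply div_le_div_of_nonneg_left (by norm_num) (by norm_num)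
                    have h1 : (1:ℝ) ≤ Real.pi := by linarith
                    calc (1:ℝ) = 1 ^ 3 := by norm_num
                      _ ≤ Real.pi ^ 3 := by gcongr
                _ ≤ 400 := by norm_num
          _ = 400 * (q ^ 2 / (ε₀ * ℓ)) * (1 + L) := by ring

end
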